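/- For a positive integer k and α = 1, the integral IS_k(x) = ∫₀^{2π} (sin(kx) − sin(kx−ky)) / sin(y/2) dy equals sin(kx) · Σ_{m=1}^{k} 8/(2m−1), and similarly IC_k(x) = ∫₀^{2π} (cos(kx) − cos(kx−ky)) / sin(y/2) dy equals cos(kx) · Σ_{m=1}^{k} 8/(2m−1). -/

import Mathlib

open intervalIntegral Real Finset

lemma tele_sin' (a y : ℝ) (k : ℕ) : Real.sin a - Real.sin (a - k*y)
    = Real.sin (y/2) * ∑ m ∈ Finset.range k, 2 * Real.cos (a - (2*m+1)*(y/2)) := by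
  induction k with
  | zero => simp
  | succ n ih =>
    have h : Real.sin (a - n*y) - Real.sin (a - (n+1)*y)
        = Real.sin (y/2) * (2 * Real.cos (a - (2*n+1)*(y/2))) := by
      rw [Real.sin_sub_sin]
      ring_nf
    rw [Finset.sum_range_succ, mul_add]
    push_cast
    push_cast at h ih
    linarith

lemma tele_cos' (a y : ℝ) (k : ℕ) : Real.cos a - Real.cos (a - k*y)
    = Real.sin (y/2) * ∑ m ∈ Finset.range k, (-2) * Real.sin (a - (2*m+1)*(y/2)) := by
  induction k with
  | zero => simp
  | succ n ih =>
    have h : Real.cos (a - n*y) - Real.cos (a - (n+1)*y)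
        = Real.sin (y/2) * ((-2) * Real.sin (a - (2*n+1)*(y/2))) := by
      rw [Real.cos_sub_cos]
      ring_nf
    rw [Finset.sum_range_succ, mul_add]
    push_cast
    push_cast at h ih
    linarith

lemma int_cos_lin' (a c T : ℝ) (hc : c ≠ 0) :
    ∫ y in (0:ℝ)..T, Real.cos (a - c*y) = (Real.sin a - Real.sin (a - c*T))/c := by
  have key : ∀ y ∈ Set.uIcc (0:ℝ) T,
      HasDerivAt (fun t => -Real.sin (a - c*t)/c) (Real.cos (a - c*y)) y := by
    intro y _
    have h1 : HasDerivAt (fun t : ℝ => a - c*t) (-c) y := by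
      simpa using ((hasDerivAt_id y).const_mul c).const_sub a
    have h3 := (h1.sin.neg.div_const c)
    exact h3.congr_deriv (by rw [div_eq_iff hc]; ring)
  have hcont : IntervalIntegrable (fun y => Real.cos (a - c*y)) MeasureTheory.volume 0 T := by
    apply Continuous.intervalIntegrable; fun_prop
  rw [intervalIntegral.integral_eq_sub_of_hasDerivAt key hcont]
  field_simp
  ring

lemma int_sin_lin' (a c T : ℝ) (hc : c ≠ 0) :
    ∫ y in (0:ℝ)..T, Real.sin (a - c*y) = (Real.cos (a - c*T) - Real.cos a)/c := by
  have key : ∀ y ∈ Set.uIcc (0:ℝ) T,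
      HasDerivAt (fun t => Real.cos (a - c*t)/c) (Real.sin (a - c*y)) y := by
    intro y _
    have h1 : HasDerivAt (fun t : ℝ => a - c*t) (-c) y := by
      simpa using ((hasDerivAt_id y).const_mul c).const_sub a
    have h3 := (h1.cos.div_const c)
    exact h3.congr_deriv (by rw [div_eq_iff hc]; ring)
  have hcont : IntervalIntegrable (fun y => Real.sin (a - c*y)) MeasureTheory.volume 0 T := by
    apply Continuous.intervalIntegrable; fun_prop
  rw [intervalIntegral.integral_eq_sub_of_hasDerivAt key hcont]
  field_simp
  simp

lemma sin_odd_mul_pi (m : ℕ) : Real.sin ((2*(m:ℝ)+1)*Real.pi) = 0 := by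
  have : (2*(m:ℝ)+1)*Real.pi = ((2*m+1 : ℕ):ℝ) * Real.pi := by push_cast; ring
  rw [this, Real.sin_nat_mul_pi]

lemma cos_odd_mul_pi (m : ℕ) : Real.cos ((2*(m:ℝ)+1)*Real.pi) = -1 := by
  have : (2*(m:ℝ)+1)*Real.pi = (m:ℝ)*(2*Real.pi) + Real.pi := by ring
  rw [this, Real.cos_add, Real.cos_nat_mul_two_pi]
  simp

lemma sin_half_ne (y : ℝ) (h0 : 0 < y) (h2 : y < 2*Real.pi) : Real.sin (y/2) ≠ 0 :=
  ne_of_gt (Real.sin_pos_of_pos_of_lt_pi (by linarith) (by linarith))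

theorem IS_IC_alpha_one (k : ℕ) (hk : 1 ≤ k) (x : ℝ) :
    (∫ y in (0:ℝ)..(2 * Real.pi),
        (Real.sin (k * x) - Real.sin (k * x - k * y)) / Real.sin (y / 2)
      = Real.sin (k * x) * ∑ m ∈ Finset.range k, 8 / (2 * (m : ℝ) + 1)) ∧
    (∫ y in (0:ℝ)..(2 * Real.pi),
        (Real.cos (k * x) - Real.cos (k * x - k * y)) / Real.sin (y / 2)
      = Real.cos (k * x) * ∑ m ∈ Finset.range k, 8 / (2 * (m : ℝ) + 1)) := by
  have hae : ∀ᵐ y : ℝ, y ≠ 2*Real.pi := by simp [MeasureTheory.ae_iff]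
  have hmem : ∀ y : ℝ, y ≠ 2*Real.pi → y ∈ Set.uIoc (0:ℝ) (2*Real.pi) →
      Real.sin (y/2) ≠ 0 := by
    intro y hne hy
    rw [Set.uIoc_of_le (by positivity)] at hy
    exact sin_half_ne y hy.1 (lt_of_le_of_ne hy.2 hne)
  constructor
  · have heq : (∫ y in (0:ℝ)..(2 * Real.pi),
        (Real.sin (k * x) - Real.sin (k * x - k * y)) / Real.sin (y / 2))
        = ∫ y in (0:ℝ)..(2 * Real.pi),
          ∑ m ∈ Finset.range k, 2 * Real.cos (k*x - (2*(m:ℝ)+1)/2*y) := by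
      apply intervalIntegral.integral_congr_ae
      filter_upwards [hae] with y hne hy
      have hs := hmem y hne hy
      rw [tele_sin' ((k:ℝ)*x) y k, mul_div_cancel_left₀ _ hs]
      apply Finset.sum_congr rfl
      intro m _
      ring_nf
    rw [heq, intervalIntegral.integral_finset_sum]
    · rw [Finset.mul_sum]
      apply Finset.sum_congr rfl
      intro m _
      have hc : (2*(m:ℝ)+1)/2 ≠ 0 := by positivity
      rw [intervalIntegral.integral_const_mul, int_cos_lin' _ _ _ hc]
      have h2 : (k:ℝ)*x - (2*(m:ℝ)+1)/2*(2*Real.pi) = (k:ℝ)*x - (2*(m:ℝ)+1)*Real.pi := by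
        ring
      rw [h2, Real.sin_sub, sin_odd_mul_pi, cos_odd_mul_pi]
      have : (2*(m:ℝ)+1) ≠ 0 := by positivity
      field_simp
      ring
    · intro m _
      apply Continuous.intervalIntegrable
      fun_prop
  · have heq : (∫ y in (0:ℝ)..(2 * Real.pi),
        (Real.cos (k * x) - Real.cos (k * x - k * y)) / Real.sin (y / 2))
        = ∫ y in (0:ℝ)..(2 * Real.pi),
          ∑ m ∈ Finset.range k, (-2) * Real.sin (k*x - (2*(m:ℝ)+1)/2*y) := by
      apply intervalIntegral.integral_congr_ae
      filter_upwards [hae] with y hne hy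
      have hs := hmem y hne hy
      rw [tele_cos' ((k:ℝ)*x) y k, mul_div_cancel_left₀ _ hs]
      apply Finset.sum_congr rfl
      intro m _
      ring_nf
    rw [heq, intervalIntegral.integral_finset_sum]
    · rw [Finset.mul_sum]
      apply Finset.sum_congr rfl
      intro m _
      have hc : (2*(m:ℝ)+1)/2 ≠ 0 := by positivity
      rw [intervalIntegral.integral_const_mul, int_sin_lin' _ _ _ hc]
      have h2 : (k:ℝ)*x - (2*(m:ℝ)+1)/2*(2*Real.pi) = (k:ℝ)*x - (2*(m:ℝ)+1)*Real.pi := by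
        ring
      rw [h2, Real.cos_sub, sin_odd_mul_pi, cos_odd_mul_pi]
      have : (2*(m:ℝ)+1) ≠ 0 := by positivity
      field_simp
      ring
    · intro m _
      apply Continuous.intervalIntegrable
      fun_prop
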